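/- (Uniqueness of pivots under reduction) If R = D·V and R' = D·V' are two reduced matrices obtained from the same m×m matrix D over Z/2Z by invertible upper triangular V and V', then R and R' have the same set of pivot pairs: for every j, column j of R is zero iff column j of R' is zero, and if nonzero they have the same pivot. -/

import Mathlib

open Matrix

/-- `i` is the pivot of column `j` of `M`. -/
def IsPivot {m : ℕ} (M : Matrix (Fin m) (Fin m) (ZMod 2)) (i j : Fin m) : Prop :=
  M i j ≠ 0 ∧ ∀ i' : Fin m, i < i' → M i' j = 0

/-- `M` is reduced: all nonzero columns have pairwise distinct pivots. -/
def Reduced {m : ℕ} (M : Matrix (Fin m) (Fin m) (ZMod 2)) : Prop :=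
  ∀ i j j' : Fin m, IsPivot M i j → IsPivot M i j' → j = j'

/-- Column `j` of `M` admits a "clearing combination" on rows in `S`:
there is a linear combination of columns `≤ j` with coefficient `1` at `j`
that vanishes on all rows in `S`. -/
def Clears {m : ℕ} (M : Matrix (Fin m) (Fin m) (ZMod 2)) (S : Set (Fin m)) (j : Fin m) : Prop :=
  ∃ c : Fin m → ZMod 2, c j = 1 ∧ (∀ j', j < j' → c j' = 0) ∧ ∀ i ∈ S, M.mulVec c i = 0

lemma diag_one_of_unit {m : ℕ} {V : Matrix (Fin m) (Fin m) (ZMod 2)}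
    (hVu : IsUnit V) (hVt : V.BlockTriangular id) (j : Fin m) : V j j = 1 := by
  have hdet : IsUnit V.det := (Matrix.isUnit_iff_isUnit_det V).mp hVu
  rw [Matrix.det_of_upperTriangular hVt] at hdet
  have : IsUnit (V j j) := by
    rw [← Finset.mul_prod_erase Finset.univ _ (Finset.mem_univ j)] at hdet
    exact isUnit_of_mul_isUnit_left hdet
  have hne : V j j ≠ 0 := this.ne_zero
  revert hne; revert this
  generalize V j j = x
  revert x; decide

lemma clears_of_clears_mul {m : ℕ} (D V : Matrix (Fin m) (Fin m) (ZMod 2))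
    (hVu : IsUnit V) (hVt : V.BlockTriangular id) (S : Set (Fin m)) (j : Fin m)
    (h : Clears (D * V) S j) : Clears D S j := by
  obtain ⟨c, hcj, hsupp, hzero⟩ := h
  refine ⟨V.mulVec c, ?_, ?_, ?_⟩
  · have : V.mulVec c j = ∑ k, V j k * c k := rfl
    rw [this, Finset.sum_eq_single j]
    · rw [hcj, mul_one, diag_one_of_unit hVu hVt]
    · intro k _ hk
      rcases lt_or_gt_of_ne hk with h1 | h1
      · rw [hVt h1, zero_mul]
      · rw [hsupp k h1, mul_zero]
    · intro h; exact absurd (Finset.mem_univ j) h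
  · intro j' hj'
    have : V.mulVec c j' = ∑ k, V j' k * c k := rfl
    rw [this]
    apply Finset.sum_eq_zero
    intro k _
    rcases lt_or_ge k j' with h1 | h1
    · rw [hVt h1, zero_mul]
    · rw [hsupp k (lt_of_lt_of_le hj' h1), mul_zero]
  · intro i hi
    rw [Matrix.mulVec_mulVec]
    exact hzero i hi

lemma clears_iff_mul {m : ℕ} (D V : Matrix (Fin m) (Fin m) (ZMod 2))
    (hVu : IsUnit V) (hVt : V.BlockTriangular id) (S : Set (Fin m)) (j : Fin m) :
    Clears (D * V) S j ↔ Clears D S j := by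
  constructor
  · exact clears_of_clears_mul D V hVu hVt S j
  · intro h
    have hinv : Invertible V := hVu.nonempty_invertible.some
    have hVinvt : V⁻¹.BlockTriangular id := blockTriangular_inv_of_blockTriangular hVt
    have hVinvu : IsUnit V⁻¹ := (isUnit_nonsing_inv_iff).mpr hVu
    have hD : D = D * V * V⁻¹ := by
      rw [Matrix.mul_assoc, Matrix.mul_nonsing_inv V ((Matrix.isUnit_iff_isUnit_det V).mp hVu),
        Matrix.mul_one]
    rw [hD] at h
    exact clears_of_clears_mul (D * V) V⁻¹ hVinvu hVinvt S j h

/-- For a reduced matrix and an upward-closed row set, clearing is equivalent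
to the column being zero on those rows. -/
lemma clears_iff_zero {m : ℕ} (R : Matrix (Fin m) (Fin m) (ZMod 2))
    (hred : Reduced R) (S : Set (Fin m)) (hS : ∀ i i' : Fin m, i ∈ S → i ≤ i' → i' ∈ S)
    (j : Fin m) : Clears R S j ↔ ∀ i ∈ S, R i j = 0 := by
  constructor
  · rintro ⟨c, hcj, _, hzero⟩
    -- the set of columns with nonzero coefficient and some nonzero entry in S
    by_contra hcon
    push_neg at hcon
    classical
    -- T: columns with nonzero coeff and nonzero on S
    set T : Finset (Fin m) :=
      Finset.univ.filter (fun j' => c j' ≠ 0 ∧ ∃ i ∈ S, R i j' ≠ 0) with hT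
    have hjT : j ∈ T := by
      obtain ⟨i, hiS, hij⟩ := hcon
      simp only [hT, Finset.mem_filter, Finset.mem_univ, true_and]
      exact ⟨by rw [hcj]; exact one_ne_zero, ⟨i, hiS, hij⟩⟩
    -- pivot of a column in T
    have hpivset : ∀ j' ∈ T, (Finset.univ.filter (fun i => R i j' ≠ 0)).Nonempty := by
      intro j' hj'
      simp only [hT, Finset.mem_filter, Finset.mem_univ, true_and] at hj'
      obtain ⟨_, i, _, hij⟩ := hj'
      exact ⟨i, by simp [hij]⟩
    -- the pivot function
    let piv : Fin m → Fin m := fun j' =>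
      if h : (Finset.univ.filter (fun i => R i j' ≠ 0)).Nonempty
      then (Finset.univ.filter (fun i => R i j' ≠ 0)).max' h else j
    have hpiv_spec : ∀ j' ∈ T, IsPivot R (piv j') j' := by
      intro j' hj'
      have h := hpivset j' hj'
      constructor
      · have := Finset.max'_mem _ h
        simp only [Finset.mem_filter] at this
        simpa [piv, dif_pos h] using this.2
      · intro i' hi'
        by_contra hne
        have hmem : i' ∈ Finset.univ.filter (fun i => R i j' ≠ 0) := by simp [hne]
        have := Finset.le_max' _ i' hmem
        simp only [piv, dif_pos h] at hi'
        exact absurd (lt_of_lt_of_le hi' this) (lt_irrefl _)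
    have hpiv_S : ∀ j' ∈ T, piv j' ∈ S := by
      intro j' hj'
      have hj'' := hj'
      simp only [hT, Finset.mem_filter, Finset.mem_univ, true_and] at hj''
      obtain ⟨_, i, hiS, hij⟩ := hj''
      have h := hpivset j' hj'
      have : i ≤ piv j' := by
        have hmem : i ∈ Finset.univ.filter (fun i => R i j' ≠ 0) := by simp [hij]
        simpa [piv, dif_pos h] using Finset.le_max' _ i hmem
      exact hS i _ hiS this
    -- take the column with maximal pivot
    obtain ⟨j₀, hj₀T, hj₀max⟩ := T.exists_max_image piv ⟨j, hjT⟩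
    set p := piv j₀ with hp
    have hpS : p ∈ S := hpiv_S j₀ hj₀T
    have hsum := hzero p hpS
    have hsum' : R.mulVec c p = ∑ j', c j' * R p j' := by
      simp [Matrix.mulVec, dotProduct, mul_comm]
    rw [hsum'] at hsum
    have : ∑ j', c j' * R p j' = c j₀ * R p j₀ := by
      apply Finset.sum_eq_single j₀
      · intro j' _ hne
        rcases eq_or_ne (c j') 0 with h0 | h0
        · rw [h0, zero_mul]
        rcases Classical.em (∃ i ∈ S, R i j' ≠ 0) with hEx | hEx
        · have hj'T : j' ∈ T := by
            simp only [hT, Finset.mem_filter, Finset.mem_univ, true_and]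
            exact ⟨h0, hEx⟩
          -- pivot of j' is ≤ p, and distinct from pivot of j₀ since j' ≠ j₀
          have hle : piv j' ≤ p := hj₀max j' hj'T
          have hneq : piv j' ≠ p := by
            intro heq
            exact hne (hred p j' j₀ (heq ▸ hpiv_spec j' hj'T) (hp ▸ hpiv_spec j₀ hj₀T))
          have hlt : piv j' < p := lt_of_le_of_ne hle hneq
          rw [(hpiv_spec j' hj'T).2 p hlt, mul_zero]
        · push_neg at hEx
          rw [hEx p hpS, mul_zero]
      · intro h; exact absurd (Finset.mem_univ j₀) h
    rw [this] at hsum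
    have hc0 : c j₀ ≠ 0 := by
      have := hj₀T
      simp only [hT, Finset.mem_filter, Finset.mem_univ, true_and] at this
      exact this.1
    have hR0 : R p j₀ ≠ 0 := (hpiv_spec j₀ hj₀T).1
    exact (mul_ne_zero hc0 hR0) hsum
  · intro h
    classical
    refine ⟨Pi.single j 1, by simp, ?_, ?_⟩
    · intro j' hj'
      exact Pi.single_eq_of_ne (ne_of_gt hj') 1
    · intro i hi
      rw [Matrix.mulVec_single]
      simpa using h i hi

/-- Uniqueness of pivots under reduction: two reduced matrices obtained from
the same matrix `D` by right multiplication with invertible upper triangular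
matrices have the same zero columns and the same pivots. -/
theorem pivots_unique {m : ℕ}
    (D V V' : Matrix (Fin m) (Fin m) (ZMod 2))
    (hVu : IsUnit V) (hVt : V.BlockTriangular id)
    (hV'u : IsUnit V') (hV't : V'.BlockTriangular id)
    (hred : Reduced (D * V)) (hred' : Reduced (D * V')) :
    ∀ j : Fin m, ((D * V)ᵀ j = 0 ↔ (D * V')ᵀ j = 0) ∧
      (∀ i : Fin m, IsPivot (D * V) i j ↔ IsPivot (D * V') i j) := by
  intro j
  have key : ∀ (S : Set (Fin m)), (∀ i i' : Fin m, i ∈ S → i ≤ i' → i' ∈ S) →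
      ((∀ i ∈ S, (D * V) i j = 0) ↔ (∀ i ∈ S, (D * V') i j = 0)) := by
    intro S hS
    rw [← clears_iff_zero (D * V) hred S hS j, ← clears_iff_zero (D * V') hred' S hS j,
      clears_iff_mul D V hVu hVt S j, clears_iff_mul D V' hV'u hV't S j]
  constructor
  · have h := key Set.univ (fun _ _ _ _ => Set.mem_univ _)
    constructor
    · intro hz
      funext i
      have : ∀ i ∈ Set.univ, (D * V') i j = 0 := by
        apply h.mp
        intro i _
        exact congrFun hz i
      exact this i (Set.mem_univ i)
    · intro hz
      funext i
      have : ∀ i ∈ Set.univ, (D * V) i j = 0 := by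
        apply h.mpr
        intro i _
        exact congrFun hz i
      exact this i (Set.mem_univ i)
  · intro i
    have hge := key {i' | i ≤ i'} (fun a b ha hab => le_trans ha hab)
    have hgt := key {i' | i < i'} (fun a b ha hab => lt_of_lt_of_le ha hab)
    have hiff : ∀ (M : Matrix (Fin m) (Fin m) (ZMod 2)),
        IsPivot M i j ↔ (¬ (∀ i' ∈ {i' | i ≤ i'}, M i' j = 0) ∧
          (∀ i' ∈ {i' | i < i'}, M i' j = 0)) := by
      intro M
      constructor
      · rintro ⟨hne, hz⟩
        refine ⟨fun h => hne (h i (le_refl i)), fun i' hi' => hz i' hi'⟩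
      · rintro ⟨hne, hz⟩
        refine ⟨?_, fun i' hi' => hz i' hi'⟩
        intro h0
        apply hne
        intro i' hi'
        rcases eq_or_lt_of_le (show i ≤ i' from hi') with heq | hlt
        · rw [← heq]; exact h0
        · exact hz i' hlt
    rw [hiff (D * V), hiff (D * V'), hge, hgt]
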